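/- (Brauer's Third Main Theorem) Let p be a prime, k an algebraically closed field of characteristic p, H a finite group, Q a p-subgroup of H, and N = N_H(Q). Let b_0 be the principal block of k[H], e_0 the principal block of k[N], and f_0 the principal block of k[C_H(Q)]. Then Br_Q(b_0)·e_0 = e_0 and Br_Q(b_0)·f_0 = f_0; that is, under the Brauer correspondence the principal blocks of H, of N_H(Q), and of C_H(Q) correspond. -/

import Mathlib

variable {k : Type*} [Field k] {H : Type*} [Group H]

/-- A *block* of a ring: a primitive idempotent of the center, i.e. a nonzero central
idempotent which is not the sum of two nonzero orthogonal central idempotents. -/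
def IsBlockIdem {R : Type*} [Ring R] (b : R) : Prop :=
  b ∈ Subring.center R ∧ IsIdempotentElem b ∧ b ≠ 0 ∧
    ∀ c d : R, c ∈ Subring.center R → d ∈ Subring.center R →
      IsIdempotentElem c → IsIdempotentElem d → c * d = 0 → b = c + d → c = 0 ∨ d = 0

open Classical in
/-- The truncation of `x ∈ k[H]` to a subset `s ⊆ H` (keep only coefficients on `s`). -/
noncomputable def truncate (s : Set H) (x : MonoidAlgebra k H) : MonoidAlgebra k H :=
  MonoidAlgebra.ofCoeff (Finsupp.filter (· ∈ s) x.coeff)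

/-- The Brauer morphism associated with a subgroup `Q ≤ H`: it keeps exactly the
coefficients on the centralizer `C_H(Q)`. -/
noncomputable def Br (Q : Subgroup H) (x : MonoidAlgebra k H) : MonoidAlgebra k H :=
  truncate ((Subgroup.centralizer (Q : Set H) : Subgroup H) : Set H) x

/-- `b` is the image in `k[H]` of a block of the group algebra `k[X]` of the
subgroup `X ≤ H`. -/
def IsBlockOf (X : Subgroup H) (b : MonoidAlgebra k H) : Prop :=
  ∃ b₀ : MonoidAlgebra k ↥X, IsBlockIdem b₀ ∧
    b = MonoidAlgebra.mapDomainRingHom k X.subtype b₀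

/-- Defect groups of a block `b` of `k[H]` : maximal `p`-subgroups `D` with `Br_D(b) ≠ 0`. -/
def IsDefectGroup (p : ℕ) (b : MonoidAlgebra k H) (D : Subgroup H) : Prop :=
  IsPGroup p D ∧ Br D b ≠ 0 ∧
    ∀ D' : Subgroup H, IsPGroup p D' → Br D' b ≠ 0 → D ≤ D' → D' = D

/-- The Brauer morphism relative to a subgroup `X` (for blocks of `k[X]`), associated with a
`p`-subgroup `D ≤ X`: it keeps exactly the coefficients on `C_X(D) = C_H(D) ⊓ X`. -/
noncomputable def BrIn (X D : Subgroup H) (x : MonoidAlgebra k H) : MonoidAlgebra k H :=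
  truncate ((Subgroup.centralizer (D : Set H) ⊓ X : Subgroup H) : Set H) x

/-- Defect groups (inside `X`) of a block `b` of `k[X]`, viewed in `k[H]`. -/
def IsDefectGroupIn (p : ℕ) (X : Subgroup H) (b : MonoidAlgebra k H) (D : Subgroup H) : Prop :=
  D ≤ X ∧ IsPGroup p D ∧ BrIn X D b ≠ 0 ∧
    ∀ D' : Subgroup H, D' ≤ X → IsPGroup p D' → BrIn X D' b ≠ 0 → D ≤ D' → D' = D

/-- The augmentation map `k[H] → k`, `∑ λ_h h ↦ ∑ λ_h`. -/
noncomputable def aug (x : MonoidAlgebra k H) : k :=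
  Finsupp.sum x.coeff fun _ c => c

/-! ### Auxiliary material for the proof -/

section Aux

/-- The conjugation homomorphism into permutations. -/
private def conjPerm (G : Type*) [Group G] : G →* Equiv.Perm G where
  toFun g :=
    { toFun := fun h => g * h * g⁻¹
      invFun := fun h => g⁻¹ * h * g
      left_inv := fun h => by group
      right_inv := fun h => by group }
  map_one' := by ext h; simp
  map_mul' := fun a b => by
    ext h
    simp only [Equiv.coe_fn_mk, Equiv.Perm.coe_mul, Function.comp_apply, mul_inv_rev]
    group

@[simp] private lemma conjPerm_apply {G : Type*} [Group G] (g h : G) :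
    conjPerm G g h = g * h * g⁻¹ := rfl

/-- Diagonal action on pairs. -/
private def diagPerm {G α : Type*} [Group G] (φ : G →* Equiv.Perm α) :
    G →* Equiv.Perm (α × α) where
  toFun g := Equiv.prodCongr (φ g) (φ g)
  map_one' := by ext x <;> simp
  map_mul' := fun a b => by
    ext x <;> simp [Equiv.Perm.coe_mul]

@[simp] private lemma diagPerm_apply {G α : Type*} [Group G] (φ : G →* Equiv.Perm α) (g : G)
    (uv : α × α) : diagPerm φ g uv = (φ g uv.1, φ g uv.2) := rfl

open MulAction in
open Classical in
/-- Summing a `p`-group-invariant function in characteristic `p`: only fixed points matter. -/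
private lemma key_sum {p : ℕ} [Fact p.Prime] [CharP k p]
    {G : Type*} [Group G] [Finite G] (hG : IsPGroup p G)
    {α : Type*} [Fintype α] (φ : G →* Equiv.Perm α) (f : α → k)
    (hf : ∀ (g : G) (a : α), f (φ g a) = f a) :
    ∑ a, f a = ∑ a, if (∀ g : G, φ g a = a) then f a else 0 := by
  classical
  letI : MulAction G α :=
    { smul := fun g a => φ g a
      one_smul := fun a => by show φ 1 a = a; simp
      mul_smul := fun g g' a => by show φ (g * g') a = φ g (φ g' a); simp }
  have hsmul : ∀ (g : G) (a : α), g • a = φ g a := fun _ _ => rfl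
  letI : Fintype G := Fintype.ofFinite G
  letI : Fintype (Quotient (orbitRel G α)) := Fintype.ofFinite _
  refine Eq.trans (Finset.sum_fiberwise Finset.univ
      (fun a : α => Quotient.mk (orbitRel G α) a) f).symm
    (Eq.trans (Finset.sum_congr rfl fun ω _ => ?_)
      (Eq.trans
        (Finset.sum_fiberwise Finset.univ (fun a : α => Quotient.mk (orbitRel G α) a)
          (fun a => if (∀ g : G, φ g a = a) then f a else 0))
        (Finset.sum_congr rfl fun a _ => by split_ifs <;> rfl)))
  set b := ω.out with hbdef
  have hmem : ∀ a : α, Quotient.mk (orbitRel G α) a = ω ↔ a ∈ orbit G b := by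
    intro a
    constructor
    · intro h
      exact orbitRel_apply.mp (Quotient.exact (h.trans (Quotient.out_eq ω).symm))
    · intro h
      exact (Quotient.sound (orbitRel_apply.mpr h)).trans (Quotient.out_eq ω)
  by_cases hfix : ∀ g : G, φ g b = b
  · have horb : ∀ a : α, a ∈ orbit G b ↔ a = b := by
      intro a
      constructor
      · rintro ⟨g, rfl⟩; exact hfix g
      · rintro rfl; exact mem_orbit_self b
    have hfil : Finset.univ.filter (fun a : α => Quotient.mk (orbitRel G α) a = ω) = {b} := by
      ext a; simp [hmem, horb]
    rw [hfil]
    simp [hfix]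
  · have hnof : ∀ a ∈ Finset.univ.filter (fun a : α => Quotient.mk (orbitRel G α) a = ω),
        ¬ (∀ g : G, φ g a = a) := by
      intro a ha hafix
      rw [Finset.mem_filter] at ha
      obtain ⟨g, hg⟩ := mem_orbit_iff.mp ((hmem a).mp ha.2)
      have hba : b = a := by
        calc b = g⁻¹ • (g • b) := by rw [inv_smul_smul]
        _ = g⁻¹ • a := by rw [hg]
        _ = a := hafix g⁻¹
      exact hfix (fun g' => hba ▸ hafix g')
    rw [Finset.sum_eq_zero fun a ha => if_neg (hnof a ha)]
    have hconst : ∀ a ∈ Finset.univ.filter (fun a : α => Quotient.mk (orbitRel G α) a = ω),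
        f a = f b := by
      intro a ha
      rw [Finset.mem_filter] at ha
      obtain ⟨g, hg⟩ := mem_orbit_iff.mp ((hmem a).mp ha.2)
      rw [← hg]; exact hf g b
    rw [Finset.sum_congr rfl hconst, Finset.sum_const]
    have hfin : Finset.univ.filter (fun a : α => Quotient.mk (orbitRel G α) a = ω)
        = (orbit G b).toFinset := by
      ext a; simp [hmem]
    have hdvd : Fintype.card (orbit G b) ∣ Fintype.card G :=
      ⟨Fintype.card (stabilizer G b), (card_orbit_mul_card_stabilizer_eq_card_group G b).symm⟩
    obtain ⟨n, hn⟩ := IsPGroup.iff_card.mp hG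
    rw [Nat.card_eq_fintype_card] at hn
    obtain ⟨m, hm, hcard⟩ := (Nat.dvd_prime_pow Fact.out).mp (hn ▸ hdvd)
    have hm0 : m ≠ 0 := by
      intro h0
      rw [h0, pow_zero] at hcard
      exact hfix fun g => (mem_fixedPoints_iff_card_orbit_eq_one.mpr hcard) g
    have hpd : p ∣ Fintype.card (orbit G b) := hcard ▸ dvd_pow_self p hm0
    have hzero : ((Finset.univ.filter
        (fun a : α => Quotient.mk (orbitRel G α) a = ω)).card : k) = 0 := by
      rw [hfin, Set.toFinset_card]
      exact (CharP.cast_eq_zero_iff k p _).mpr hpd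
    rw [nsmul_eq_mul, hzero, zero_mul]

open Classical in
/-- Coefficients of the Brauer morphism. -/
private lemma Br_apply (Q : Subgroup H) (x : MonoidAlgebra k H) (h : H) :
    (Br Q x).coeff h = if h ∈ Subgroup.centralizer (Q : Set H) then x.coeff h else 0 := by
  classical
  by_cases hh : h ∈ Subgroup.centralizer (Q : Set H)
  · rw [if_pos hh, Br, truncate, MonoidAlgebra.coeff_ofCoeff, Finsupp.filter_apply, if_pos (by exact hh)]
  · rw [if_neg hh, Br, truncate, MonoidAlgebra.coeff_ofCoeff, Finsupp.filter_apply, if_neg (by exact hh)]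

/-- Coefficients of central elements are conjugation invariant. -/
private lemma central_coeff_conj {b : MonoidAlgebra k H}
    (hb : b ∈ Subring.center (MonoidAlgebra k H)) (g h : H) : b.coeff (g * h * g⁻¹) = b.coeff h := by
  have h1 := Subring.mem_center_iff.mp hb (MonoidAlgebra.single g 1)
  have h2 : (MonoidAlgebra.single g 1 * b : MonoidAlgebra k H).coeff (g * h)
      = (b * MonoidAlgebra.single g 1 : MonoidAlgebra k H).coeff (g * h) := by
    rw [h1]
  rw [MonoidAlgebra.coeff_single_mul_apply, MonoidAlgebra.coeff_mul_single_apply] at h2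
  simpa using h2.symm

private lemma conj_mem_centralizer {Q : Subgroup H} {g h : H} (hg : g ∈ Subgroup.normalizer (Q : Set H))
    (hh : h ∈ Subgroup.centralizer (Q : Set H)) :
    g * h * g⁻¹ ∈ Subgroup.centralizer (Q : Set H) := by
  rw [Subgroup.mem_centralizer_iff] at hh ⊢
  intro s hs
  have hs' : g⁻¹ * s * g ∈ Q := by
    refine (Subgroup.mem_normalizer_iff.mp hg _).mpr ?_
    have hss : g * (g⁻¹ * s * g) * g⁻¹ = s := by group
    rw [hss]; exact hs
  have hc := hh (g⁻¹ * s * g) hs'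
  calc s * (g * h * g⁻¹) = g * ((g⁻¹ * s * g) * h) * g⁻¹ := by group
    _ = g * (h * (g⁻¹ * s * g)) * g⁻¹ := by rw [hc]
    _ = (g * h * g⁻¹) * s := by group

private lemma conj_mem_centralizer_iff {Q : Subgroup H} {g : H} (hg : g ∈ Subgroup.normalizer (Q : Set H)) (h : H) :
    g * h * g⁻¹ ∈ Subgroup.centralizer (Q : Set H) ↔
      h ∈ Subgroup.centralizer (Q : Set H) := by
  constructor
  · intro hc
    have := conj_mem_centralizer (inv_mem hg) hc
    have he : g⁻¹ * (g * h * g⁻¹) * g⁻¹⁻¹ = h := by group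
    rwa [he] at this
  · exact conj_mem_centralizer hg

/-- Conjugation invariance of `Br Q b₀` under the normalizer of `Q`. -/
private lemma Br_coeff_conj {Q : Subgroup H} {b : MonoidAlgebra k H}
    (hb : b ∈ Subring.center (MonoidAlgebra k H)) {g : H} (hg : g ∈ Subgroup.normalizer (Q : Set H)) (h : H) :
    (Br Q b).coeff (g * h * g⁻¹) = (Br Q b).coeff h := by
  rw [Br_apply, Br_apply]
  by_cases hh : h ∈ Subgroup.centralizer (Q : Set H)
  · rw [if_pos ((conj_mem_centralizer_iff hg h).mpr hh), if_pos hh, central_coeff_conj hb]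
  · rw [if_neg (fun hc => hh ((conj_mem_centralizer_iff hg h).mp hc)), if_neg hh]

private lemma fixed_iff_centralizer (Q : Subgroup H) (u : H) :
    (∀ g : ↥Q, (g : H) * u * (g : H)⁻¹ = u) ↔ u ∈ Subgroup.centralizer (Q : Set H) := by
  rw [Subgroup.mem_centralizer_iff]
  constructor
  · intro hfix s hs
    have h1 := hfix ⟨s, hs⟩
    rwa [mul_inv_eq_iff_eq_mul] at h1
  · intro hc g
    rw [mul_inv_eq_iff_eq_mul]
    exact hc (g : H) g.2

private lemma aug_eq_sum [Fintype H] (x : MonoidAlgebra k H) : aug x = ∑ h, x.coeff h :=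
  Finsupp.sum_fintype _ _ (fun _ => rfl)

private lemma mul_apply_sum [Fintype H] [DecidableEq H] (x y : MonoidAlgebra k H) (h : H) :
    (x * y).coeff h = ∑ u, ∑ v, if u * v = h then x.coeff u * y.coeff v else 0 := by
  rw [MonoidAlgebra.coeff_mul]
  rw [Finsupp.sum_fintype _ _ (fun u => by simp [Finsupp.sum])]
  exact Finset.sum_congr rfl fun u _ => Finsupp.sum_fintype _ _ (fun v => by simp)

private lemma aug_mul [Finite H] (x y : MonoidAlgebra k H) :
    aug (x * y) = aug x * aug y := by
  classical
  letI := Fintype.ofFinite H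
  calc aug (x * y) = ∑ h, ∑ u, ∑ v, if u * v = h then x.coeff u * y.coeff v else 0 := by
        rw [aug_eq_sum]
        exact Finset.sum_congr rfl fun h _ => mul_apply_sum x y h
    _ = ∑ u, ∑ h, ∑ v, if u * v = h then x.coeff u * y.coeff v else 0 := Finset.sum_comm
    _ = ∑ u, ∑ v, ∑ h, if u * v = h then x.coeff u * y.coeff v else 0 :=
        Finset.sum_congr rfl fun u _ => Finset.sum_comm
    _ = ∑ u, ∑ v, x.coeff u * y.coeff v := by simp
    _ = aug x * aug y := by rw [aug_eq_sum, aug_eq_sum, Finset.sum_mul_sum]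

private lemma aug_mapDomain {X : Subgroup H} (y : MonoidAlgebra k ↥X) :
    aug (MonoidAlgebra.mapDomainRingHom k X.subtype y) = aug y := by
  have hmd : (MonoidAlgebra.mapDomainRingHom k X.subtype y).coeff
      = Finsupp.mapDomain (⇑X.subtype) y.coeff := rfl
  rw [aug, aug, hmd, Finsupp.sum_mapDomain_index (fun _ => rfl) (fun _ _ _ => rfl)]

private lemma aug_Br {p : ℕ} [Fact p.Prime] [CharP k p] [Finite H]
    (Q : Subgroup H) (hQ : IsPGroup p Q) {x : MonoidAlgebra k H}
    (hx : x ∈ Subring.center (MonoidAlgebra k H)) : aug (Br Q x) = aug x := by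
  classical
  letI := Fintype.ofFinite H
  rw [aug_eq_sum, aug_eq_sum]
  have key := key_sum hQ ((conjPerm H).comp Q.subtype) (fun h => x.coeff h)
    (fun g h => central_coeff_conj hx (g : H) h)
  rw [key]
  refine Finset.sum_congr rfl fun h _ => ?_
  rw [Br_apply]
  by_cases hh : h ∈ Subgroup.centralizer (Q : Set H)
  · rw [if_pos hh, if_pos]
    intro g
    exact (fixed_iff_centralizer Q h).mpr hh g
  · rw [if_neg hh, if_neg]
    intro hfix
    exact hh ((fixed_iff_centralizer Q h).mp hfix)

open Classical in
private lemma conv_sum_eq {p : ℕ} [Fact p.Prime] [CharP k p] [Fintype H]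
    (Q : Subgroup H) (hQ : IsPGroup p Q) (xc yc : H → k)
    (hx : ∀ (g : ↥Q) (a : H), xc ((g : H) * a * (g : H)⁻¹) = xc a)
    (hy : ∀ (g : ↥Q) (a : H), yc ((g : H) * a * (g : H)⁻¹) = yc a)
    {h : H} (hh : h ∈ Subgroup.centralizer (Q : Set H)) :
    ∑ u, ∑ v, (if u * v = h then
        (if u ∈ Subgroup.centralizer (Q : Set H) then xc u else 0) *
        (if v ∈ Subgroup.centralizer (Q : Set H) then yc v else 0) else 0)
      = ∑ u, ∑ v, (if u * v = h then xc u * yc v else 0) := by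
  have key := key_sum hQ (diagPerm ((conjPerm H).comp Q.subtype))
    (fun uv : H × H => if uv.1 * uv.2 = h then xc uv.1 * yc uv.2 else 0) ?hf
  case hf =>
    rintro g ⟨u, v⟩
    simp only [diagPerm_apply, MonoidHom.comp_apply, conjPerm_apply, Subgroup.coe_subtype]
    have e1 : ((g : H) * u * (g : H)⁻¹) * ((g : H) * v * (g : H)⁻¹)
        = (g : H) * (u * v) * (g : H)⁻¹ := by group
    simp only [e1]
    have hcond : ((g : H) * (u * v) * (g : H)⁻¹ = h) ↔ (u * v = h) := by
      constructor
      · intro hw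
        have h2 := (fixed_iff_centralizer Q h).mpr hh g⁻¹
        calc u * v = (g : H)⁻¹ * ((g : H) * (u * v) * (g : H)⁻¹) * (g : H) := by group
          _ = (g : H)⁻¹ * h * (g : H) := by rw [hw]
          _ = h := by simpa using h2
      · intro hw
        rw [hw]
        exact (fixed_iff_centralizer Q h).mpr hh g
    rw [hcond, hx g u, hy g v]
  have hfixuv : ∀ uv : H × H,
      (∀ g : ↥Q, diagPerm ((conjPerm H).comp Q.subtype) g uv = uv) ↔
      (uv.1 ∈ Subgroup.centralizer (Q : Set H) ∧ uv.2 ∈ Subgroup.centralizer (Q : Set H)) := by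
    rintro ⟨u, v⟩
    simp only [diagPerm_apply, MonoidHom.comp_apply, conjPerm_apply, Prod.mk.injEq,
      Subgroup.coe_subtype]
    rw [forall_and]
    exact and_congr (fixed_iff_centralizer Q u) (fixed_iff_centralizer Q v)
  calc ∑ u, ∑ v, (if u * v = h then
        (if u ∈ Subgroup.centralizer (Q : Set H) then xc u else 0) *
        (if v ∈ Subgroup.centralizer (Q : Set H) then yc v else 0) else 0)
      = ∑ uv : H × H, (if uv.1 * uv.2 = h then
        (if uv.1 ∈ Subgroup.centralizer (Q : Set H) then xc uv.1 else 0) *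
        (if uv.2 ∈ Subgroup.centralizer (Q : Set H) then yc uv.2 else 0) else 0) :=
        (Fintype.sum_prod_type (fun uv : H × H => if uv.1 * uv.2 = h then
          (if uv.1 ∈ Subgroup.centralizer (Q : Set H) then xc uv.1 else 0) *
          (if uv.2 ∈ Subgroup.centralizer (Q : Set H) then yc uv.2 else 0) else 0)).symm
    _ = ∑ uv : H × H, (if (∀ g : ↥Q, diagPerm ((conjPerm H).comp Q.subtype) g uv = uv)
          then (if uv.1 * uv.2 = h then xc uv.1 * yc uv.2 else 0) else 0) := by
        refine Finset.sum_congr rfl fun uv _ => ?_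
        by_cases hc : (∀ g : ↥Q, diagPerm ((conjPerm H).comp Q.subtype) g uv = uv)
        · obtain ⟨hu, hv⟩ := (hfixuv uv).mp hc
          rw [if_pos hc, if_pos hu, if_pos hv]
        · rw [if_neg hc]
          by_cases hu : uv.1 ∈ Subgroup.centralizer (Q : Set H)
          · have hv : ¬ uv.2 ∈ Subgroup.centralizer (Q : Set H) :=
              fun hv => hc ((hfixuv uv).mpr ⟨hu, hv⟩)
            rw [if_neg hv, mul_zero, ite_self]
          · rw [if_neg hu, zero_mul, ite_self]
    _ = ∑ uv : H × H, (if uv.1 * uv.2 = h then xc uv.1 * yc uv.2 else 0) := by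
        refine Eq.trans (Finset.sum_congr rfl fun uv _ => ?_) key.symm
        split_ifs <;> rfl
    _ = ∑ u, ∑ v, (if u * v = h then xc u * yc v else 0) :=
        Fintype.sum_prod_type (fun uv : H × H => if uv.1 * uv.2 = h then xc uv.1 * yc uv.2 else 0)

private lemma Br_mul_Br {p : ℕ} [Fact p.Prime] [CharP k p] [Finite H]
    (Q : Subgroup H) (hQ : IsPGroup p Q) {x y : MonoidAlgebra k H}
    (hx : x ∈ Subring.center (MonoidAlgebra k H))
    (hy : y ∈ Subring.center (MonoidAlgebra k H)) :
    Br Q x * Br Q y = Br Q (x * y) := by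
  classical
  letI := Fintype.ofFinite H
  refine MonoidAlgebra.coeff_injective (Finsupp.ext fun h => ?_)
  rw [mul_apply_sum, Br_apply Q (x * y) h]
  by_cases hh : h ∈ Subgroup.centralizer (Q : Set H)
  · rw [if_pos hh, mul_apply_sum]
    have hgoal := conv_sum_eq Q hQ (fun a => x.coeff a) (fun a => y.coeff a)
      (fun g a => central_coeff_conj hx (g : H) a)
      (fun g a => central_coeff_conj hy (g : H) a) hh
    refine Eq.trans (Finset.sum_congr rfl fun u _ => Finset.sum_congr rfl fun v _ => ?_) hgoal
    rw [Br_apply, Br_apply]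
    all_goals split_ifs <;> rfl
  · rw [if_neg hh]
    refine Finset.sum_eq_zero fun u _ => Finset.sum_eq_zero fun v _ => ?_
    by_cases huv : u * v = h
    · rw [if_pos huv, Br_apply, Br_apply]
      by_cases hu : u ∈ Subgroup.centralizer (Q : Set H)
      · by_cases hv : v ∈ Subgroup.centralizer (Q : Set H)
        · exact absurd (huv ▸ mul_mem hu hv) hh
        · rw [if_neg hv, mul_zero]
      · rw [if_neg hu, zero_mul]
    · rw [if_neg huv]

/-- A central idempotent of augmentation `1` absorbs the principal block. -/
private lemma block_absorb {R : Type*} [Ring R] (augR : R →+* k) (e' : R) (hb : IsBlockIdem e')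
    {z' : R} (hzc : z' ∈ Subring.center R) (hzi : IsIdempotentElem z')
    (hza : augR z' = 1) (hea : augR e' = 1) : z' * e' = e' := by
  obtain ⟨hec, hei, -, hprim⟩ := hb
  have hcom : Commute z' e' := (Subring.mem_center_iff.mp hzc e').symm
  have hc : IsIdempotentElem (z' * e') := hzi.mul_of_commute hcom hei
  have hd : IsIdempotentElem ((1 - z') * e') :=
    hzi.one_sub.mul_of_commute ((Commute.one_left e').sub_left hcom) hei
  have horth : (z' * e') * ((1 - z') * e') = 0 := by
    have h1 : Commute e' (1 - z') := (Commute.one_right e').sub_right hcom.symm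
    rw [h1.mul_mul_mul_comm, mul_one_sub, hzi, sub_self, zero_mul]
  have hsum : e' = z' * e' + (1 - z') * e' := by
    rw [← add_mul]
    have : z' + (1 - z') = 1 := by abel
    rw [this, one_mul]
  have hcmem : z' * e' ∈ Subring.center R := Subring.mul_mem _ hzc hec
  have hdmem : (1 - z') * e' ∈ Subring.center R :=
    Subring.mul_mem _ (Subring.sub_mem _ (Subring.one_mem _) hzc) hec
  rcases hprim _ _ hcmem hdmem hc hd horth hsum with h0 | h0
  · exfalso
    have : (1 : k) = 0 := by
      have := congrArg augR h0
      rwa [map_mul, hza, hea, one_mul, map_zero] at this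
    exact one_ne_zero this
  · rw [h0, add_zero] at hsum
    exact hsum.symm

/-- The augmentation ring homomorphism. -/
private noncomputable def augHom (k H : Type*) [Field k] [Group H] [Finite H] :
    MonoidAlgebra k H →+* k where
  toFun := aug
  map_one' := by
    show Finsupp.sum (MonoidAlgebra.single (1 : H) (1 : k)).coeff (fun _ c => c) = 1
    exact Finsupp.sum_single_index rfl
  map_mul' := aug_mul
  map_zero' := by
    show Finsupp.sum (0 : MonoidAlgebra k H).coeff (fun _ c => c) = 0
    exact Finsupp.sum_zero_index
  map_add' := fun x y => by
    show Finsupp.sum (x.coeff + y.coeff) (fun _ c => c)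
      = Finsupp.sum x.coeff (fun _ c => c) + Finsupp.sum y.coeff (fun _ c => c)
    exact Finsupp.sum_add_index' (fun _ => rfl) (fun _ _ _ => rfl)

@[simp] private lemma augHom_apply [Finite H] (x : MonoidAlgebra k H) :
    augHom k H x = aug x := rfl

/-- The main absorption lemma. -/
private lemma absorb_main {p : ℕ} [Fact p.Prime] [CharP k p] [Finite H]
    (Q X : Subgroup H) (hQ : IsPGroup p Q) (hXN : X ≤ Subgroup.normalizer (Q : Set H))
    (hCX : Subgroup.centralizer (Q : Set H) ≤ X)
    {b₀ e : MonoidAlgebra k H} (hb : IsBlockIdem b₀) (hba : aug b₀ = 1)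
    (he : IsBlockOf X e) (hea : aug e = 1) : Br Q b₀ * e = e := by
  classical
  obtain ⟨e', hblock, rfl⟩ := he
  have hrhm : ∀ y : MonoidAlgebra k ↥X,
      MonoidAlgebra.mapDomainRingHom k X.subtype y = MonoidAlgebra.mapDomain (⇑X.subtype) y :=
    fun _ => rfl
  have hinj : Function.Injective (MonoidAlgebra.mapDomainRingHom k X.subtype) := by
    intro a b hab
    rw [hrhm, hrhm] at hab
    exact MonoidAlgebra.mapDomain_injective (Subgroup.subtype_injective X) hab
  set z := Br Q b₀ with hzdef
  have hsupp : ↑z.coeff.support ⊆ Set.range (⇑X.subtype) := by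
    intro h hh
    rw [Finset.mem_coe, Finsupp.mem_support_iff] at hh
    have hmem : h ∈ Subgroup.centralizer (Q : Set H) := by
      by_contra hc
      rw [hzdef, Br_apply, if_neg hc] at hh
      exact hh rfl
    exact ⟨⟨h, hCX hmem⟩, rfl⟩
  set z' : MonoidAlgebra k ↥X := MonoidAlgebra.comapDomain (⇑X.subtype) (Subgroup.subtype_injective X) z with hz'def
  have hmapz : MonoidAlgebra.mapDomainRingHom k X.subtype z' = z := by
    rw [hrhm]
    exact MonoidAlgebra.mapDomain_comapDomain hsupp _
  have hzz : z * z = z := by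
    rw [hzdef, Br_mul_Br Q hQ hb.1 hb.1, hb.2.1]
  have hcommALL : ∀ y : MonoidAlgebra k ↥X,
      z * (MonoidAlgebra.mapDomainRingHom k X.subtype y)
        = (MonoidAlgebra.mapDomainRingHom k X.subtype y) * z := by
    intro y
    induction y using MonoidAlgebra.induction_linear with
    | zero => simp
    | add f g hf hg => rw [map_add, mul_add, add_mul, hf, hg]
    | single n b =>
      have hms : (MonoidAlgebra.mapDomainRingHom k X.subtype) (MonoidAlgebra.single n b)
          = MonoidAlgebra.single (n : H) b := by
        rw [hrhm, MonoidAlgebra.mapDomain_single, Subgroup.coe_subtype]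
      rw [hms]
      refine MonoidAlgebra.coeff_injective (Finsupp.ext fun w => ?_)
      rw [MonoidAlgebra.coeff_mul_single_apply, MonoidAlgebra.coeff_single_mul_apply]
      have hn : (n : H) ∈ Subgroup.normalizer (Q : Set H) := hXN n.2
      have e2 : ((n : H))⁻¹ * (w * (n : H)⁻¹) * (((n : H))⁻¹)⁻¹ = (n : H)⁻¹ * w := by group
      have e3 : z.coeff ((n : H)⁻¹ * w) = z.coeff (w * (n : H)⁻¹) := by
        rw [← e2]
        exact Br_coeff_conj hb.1 (inv_mem hn) _
      rw [e3, mul_comm]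
  have hz'c : z' ∈ Subring.center (MonoidAlgebra k ↥X) := by
    refine Subring.mem_center_iff.mpr fun y => ?_
    apply hinj
    rw [map_mul, map_mul, hmapz]
    exact (hcommALL y).symm
  have hz'i : IsIdempotentElem z' := by
    apply hinj
    rw [map_mul, hmapz, hzz]
  have hz'a : aug z' = 1 := by
    have h1 : aug z = 1 := by rw [hzdef, aug_Br Q hQ hb.1, hba]
    rw [← aug_mapDomain z', hmapz, h1]
  have hea' : aug e' = 1 := by rwa [aug_mapDomain] at hea
  have habs : z' * e' = e' :=
    block_absorb (augHom k ↥X) e' hblock hz'c hz'i hz'a hea'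
  calc z * MonoidAlgebra.mapDomainRingHom k X.subtype e'
      = MonoidAlgebra.mapDomainRingHom k X.subtype z'
        * MonoidAlgebra.mapDomainRingHom k X.subtype e' := by rw [hmapz]
    _ = MonoidAlgebra.mapDomainRingHom k X.subtype (z' * e') := (map_mul _ _ _).symm
    _ = MonoidAlgebra.mapDomainRingHom k X.subtype e' := by rw [habs]

private lemma centralizer_le_normalizer' (Q : Subgroup H) :
    Subgroup.centralizer (Q : Set H) ≤ Subgroup.normalizer (Q : Set H) := by
  intro g hg
  rw [Subgroup.mem_centralizer_iff] at hg
  rw [Subgroup.mem_normalizer_iff]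
  intro n
  constructor
  · intro hn
    have he : g * n * g⁻¹ = n := by
      rw [← hg n hn]; group
    rw [he]; exact hn
  · intro hn
    have hcomm := hg _ hn
    have h1 : g * n = g * (g * n * g⁻¹) := by
      rw [← hcomm]; group
    have h2 : n = g * n * g⁻¹ := mul_left_cancel h1
    rw [h2]; exact hn

end Aux

/-- Brauer's Third Main Theorem. The principal block of a group algebra is the
unique block on which the augmentation map takes the value `1`. Blocks of `k[N_H(Q)]` and of
`k[C_H(Q)]` are viewed inside `k[H]`, and the products `Br_Q(b₀)·e₀` and `Br_Q(b₀)·f₀`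
(which take place in `k[N_H(Q)]` resp. `k[C_H(Q)]`) are computed in `k[H]`. -/
theorem brauer_third_main
    (p : ℕ) [Fact p.Prime] (k : Type*) [Field k] [IsAlgClosed k] [CharP k p]
    (H : Type*) [Group H] [Finite H] (Q : Subgroup H) (hQ : IsPGroup p Q)
    (b₀ e₀ f₀ : MonoidAlgebra k H)
    (hb₀ : IsBlockIdem b₀ ∧ aug b₀ = 1)
    (he₀ : IsBlockOf (Subgroup.normalizer (Q : Set H)) e₀ ∧ aug e₀ = 1)
    (hf₀ : IsBlockOf (Subgroup.centralizer (Q : Set H)) f₀ ∧ aug f₀ = 1) :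
    Br Q b₀ * e₀ = e₀ ∧ Br Q b₀ * f₀ = f₀ :=
  ⟨absorb_main Q (Subgroup.normalizer (Q : Set H)) hQ le_rfl (centralizer_le_normalizer' Q)
      hb₀.1 hb₀.2 he₀.1 he₀.2,
    absorb_main Q (Subgroup.centralizer (Q : Set H)) hQ (centralizer_le_normalizer' Q) le_rfl
      hb₀.1 hb₀.2 hf₀.1 hf₀.2⟩
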